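/- Let X be a Noetherian topological space and D ⊆ X any subset. Then there exist countably many closed irreducible subsets W₀, W₁, W₂, … of X such that D ⊆ ⋃_i W_i and, for every i, the set D ∩ W_i is Zariski very dense in W_i, i.e. D ∩ W_i is not contained in any countable union of closed subsets of W_i each of which is a proper subset of W_i. -/

import Mathlib

/-- A subset `D` of an (irreducible closed) set `W` in a topological space `X` is
*Zariski very dense* in `W` if `D ∩ W` is not contained in any countable union of
closed subsets of `X` that are proper subsets of `W`. -/
def ZariskiVeryDense {X : Type*} [TopologicalSpace X] (D W : Set X) : Prop :=
  ¬ ∃ (κ : Type) (_ : Countable κ) (V : κ → Set X),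
      (∀ j, IsClosed (V j) ∧ V j ⊂ W) ∧ D ∩ W ⊆ ⋃ j, V j

/-- Auxiliary predicate: `D ∩ Z` is covered by countably many closed irreducible sets
in which `D` is very dense. -/
def GoodCover {X : Type*} [TopologicalSpace X] (D Z : Set X) : Prop :=
  ∃ (ι : Type) (_ : Countable ι) (W : ι → Set X),
    (∀ i, IsClosed (W i) ∧ IsIrreducible (W i) ∧ ZariskiVeryDense D (W i)) ∧
    D ∩ Z ⊆ ⋃ i, W i

lemma goodCover_mono {X : Type*} [TopologicalSpace X] {D Z Z' : Set X}
    (h : GoodCover D Z') (hsub : D ∩ Z ⊆ Z') : GoodCover D Z := by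
  obtain ⟨ι, hι, W, hW, hcov⟩ := h
  exact ⟨ι, hι, W, hW, fun x hx => hcov ⟨hx.1, hsub hx⟩⟩

lemma goodCover_iUnion {X : Type*} [TopologicalSpace X] {D : Set X} {κ : Type} [Countable κ]
    {A : κ → Set X} (h : ∀ j, GoodCover D (A j)) : GoodCover D (⋃ j, A j) := by
  choose ι hι W hW hcov using h
  haveI := hι
  refine ⟨Σ j, ι j, inferInstance, fun p => W p.1 p.2, fun p => hW p.1 p.2, ?_⟩
  rintro x ⟨hxD, hxU⟩
  obtain ⟨j, hj⟩ := Set.mem_iUnion.mp hxU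
  obtain ⟨i, hi⟩ := Set.mem_iUnion.mp (hcov j ⟨hxD, hj⟩)
  exact Set.mem_iUnion.mpr ⟨⟨j, i⟩, hi⟩

lemma goodCover_closed {X : Type*} [TopologicalSpace X]
    [TopologicalSpace.NoetherianSpace X] (D : Set X) (Z : TopologicalSpace.Closeds X) :
    GoodCover D (Z : Set X) := by
  induction Z using (wellFounded_lt (α := TopologicalSpace.Closeds X)).induction
    with
  | _ Z IH =>
  obtain ⟨S, hSf, hScl, hSirr, hZ⟩ :=
    TopologicalSpace.NoetherianSpace.exists_finite_set_isClosed_irreducible Z.2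
  have hgood : ∀ t ∈ S, GoodCover D t := by
    rintro t ht
    by_cases hvd : ZariskiVeryDense D t
    · exact ⟨PUnit, inferInstance, fun _ => t,
        fun _ => ⟨hScl t ht, hSirr t ht, hvd⟩,
        fun x hx => Set.mem_iUnion.mpr ⟨PUnit.unit, hx.2⟩⟩
    · rw [ZariskiVeryDense, not_not] at hvd
      obtain ⟨κ, hκ, V, hV, hcov⟩ := hvd
      haveI := hκ
      have htZ : t ⊆ (Z : Set X) := by
        show t ⊆ Z.carrier
        rw [hZ]; exact Set.subset_sUnion_of_mem ht
      have hVZ : ∀ j, (⟨V j, (hV j).1⟩ : TopologicalSpace.Closeds X) < Z := by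
        intro j
        refine lt_of_le_of_ne ?_ ?_
        · exact SetLike.coe_subset_coe.mp ((hV j).2.subset.trans htZ)
        · intro heq
          have : V j = (Z : Set X) := congrArg SetLike.coe heq
          exact (hV j).2.ne (subset_antisymm ((hV j).2.subset) (this ▸ htZ))
      have : GoodCover D (⋃ j, V j) :=
        goodCover_iUnion (fun j => IH _ (hVZ j))
      exact goodCover_mono this hcov
  obtain ⟨n, f, hf⟩ := hSf.fin_embedding
  have : GoodCover D (⋃ i : Fin n, (f i : Set X)) :=
    goodCover_iUnion (fun i => hgood (f i) (hf ▸ Set.mem_range_self i))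
  refine goodCover_mono this ?_
  rintro x ⟨hxD, hxZ⟩
  rw [show ((Z : Set X)) = ⋃₀ S from hZ] at hxZ
  obtain ⟨t, ht, hxt⟩ := hxZ
  obtain ⟨i, rfl⟩ : t ∈ Set.range f := hf.symm ▸ ht
  exact Set.mem_iUnion.mpr ⟨i, hxt⟩

theorem exists_countable_irreducible_cover_very_dense
    (X : Type*) [TopologicalSpace X] [TopologicalSpace.NoetherianSpace X]
    (D : Set X) :
    ∃ (ι : Type) (_ : Countable ι) (W : ι → Set X),
      (∀ i, IsClosed (W i) ∧ IsIrreducible (W i)) ∧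
      D ⊆ ⋃ i, W i ∧
      ∀ i, ZariskiVeryDense D (W i) := by
  obtain ⟨ι, hι, W, hW, hcov⟩ := goodCover_closed D ⊤
  refine ⟨ι, hι, W, fun i => ⟨(hW i).1, (hW i).2.1⟩, ?_, fun i => (hW i).2.2⟩
  intro x hx
  exact hcov ⟨hx, by simp⟩
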